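/- The coefficients α_{l,j} defined by (Σ_{k=2}^∞ x^k/k)^j = Σ_{l≥0} α_{l,j} x^{2j+l} satisfy α_{l,1} = 1/(l+2) and α_{l,2} = 2(H_{l+2} - 1)/(l+4), where H_n = Σ_{i=1}^n 1/i is the n-th harmonic number. -/

import Mathlib

/-- The formal power series `Σ_{k=2}^∞ x^k/k = -log(1-x) - x`. -/
noncomputable def fseries : PowerSeries ℝ :=
  PowerSeries.mk fun k => if 2 ≤ k then 1 / (k : ℝ) else 0

/-- The coefficients `α_{l,j}` defined by `f(x)^j = Σ_{l≥0} α_{l,j} x^{2j+l}`. -/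
noncomputable def alphaCoeff (l j : ℕ) : ℝ :=
  PowerSeries.coeff (R := ℝ) (2 * j + l) (fseries ^ j)

lemma alpha_sum_id (l : ℕ) :
    (∑ p ∈ Finset.HasAntidiagonal.antidiagonal (l+4),
      (if 2 ≤ p.1 then (1:ℝ)/p.1 else 0) * (if 2 ≤ p.2 then (1:ℝ)/p.2 else 0)) =
      2 * ((∑ i ∈ Finset.Icc 1 (l + 2), (1 : ℝ) / (i : ℝ)) - 1) / ((l : ℝ) + 4) := by
  rw [Finset.Nat.sum_antidiagonal_eq_sum_range_succ_mk]
  have hsub : Finset.Icc 2 (l+2) ⊆ Finset.range (l+4+1) := by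
    intro i hi; simp only [Finset.mem_Icc, Finset.mem_range] at hi ⊢; omega
  rw [← Finset.sum_subset hsub (by
    intro i hi hni
    simp only [Finset.mem_range, Finset.mem_Icc, not_and, not_le] at hi hni
    rcases lt_or_ge i 2 with h | h
    · rw [if_neg (by omega)]; ring
    · rw [if_neg (show ¬ 2 ≤ l+4-i by omega)]; ring)]
  have hcast : ∀ i, 2 ≤ i → i ≤ l+2 → ((l+4-i : ℕ) : ℝ) = (l:ℝ)+4-i := by
    intro i h1 h2
    push_cast [Nat.cast_sub (show i ≤ l+4 by omega)]; ring
  have key : ∀ i ∈ Finset.Icc 2 (l+2),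
      (if 2 ≤ i then (1:ℝ)/i else 0) * (if 2 ≤ l+4-i then (1:ℝ)/((l+4-i:ℕ):ℝ) else 0)
        = 1/((l:ℝ)+4) * ((1:ℝ)/i + 1/((l:ℝ)+4-i)) := by
    intro i hi
    simp only [Finset.mem_Icc] at hi
    rw [if_pos hi.1, if_pos (by omega), hcast i hi.1 hi.2]
    have h1 : (i:ℝ) ≠ 0 := by
      have : (0:ℝ) < i := by exact_mod_cast (show 0 < i by omega)
      exact this.ne'
    have h2 : (l:ℝ)+4-i ≠ 0 := by
      have : (i:ℝ) ≤ (l:ℝ)+2 := by exact_mod_cast hi.2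
      have : (0:ℝ) < (l:ℝ)+4-i := by linarith
      exact this.ne'
    field_simp
    ring
  rw [Finset.sum_congr rfl key, ← Finset.mul_sum, Finset.sum_add_distrib]
  have hrefl : (∑ i ∈ Finset.Icc 2 (l+2), 1/((l:ℝ)+4-i))
      = ∑ i ∈ Finset.Icc 2 (l+2), (1:ℝ)/i := by
    refine Finset.sum_nbij' (fun i => l+4-i) (fun i => l+4-i) ?_ ?_ ?_ ?_ ?_
    · intro a ha; simp only [Finset.mem_Icc] at ha ⊢; omega
    · intro a ha; simp only [Finset.mem_Icc] at ha ⊢; omega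
    · intro a ha; simp only [Finset.mem_Icc] at ha; show l+4-(l+4-a) = a; omega
    · intro a ha; simp only [Finset.mem_Icc] at ha; show l+4-(l+4-a) = a; omega
    · intro a ha
      simp only [Finset.mem_Icc] at ha
      rw [hcast a ha.1 ha.2]
  rw [hrefl]
  have hins : Finset.Icc 1 (l+2) = insert 1 (Finset.Icc 2 (l+2)) := by
    ext x; simp only [Finset.mem_Icc, Finset.mem_insert]; omega
  rw [hins, Finset.sum_insert (by simp)]
  have hL : (l:ℝ)+4 ≠ 0 := by positivity
  field_simp
  ring

/-- `α_{l,1} = 1/(l+2)` and `α_{l,2} = 2(H_{l+2} - 1)/(l+4)`, where `H_n` is the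
`n`-th harmonic number. -/
theorem alphaCoeff_explicit (l : ℕ) :
    alphaCoeff l 1 = 1 / ((l : ℝ) + 2) ∧
    alphaCoeff l 2 =
      2 * ((∑ i ∈ Finset.Icc 1 (l + 2), (1 : ℝ) / (i : ℝ)) - 1) / ((l : ℝ) + 4) := by
  constructor
  · rw [alphaCoeff, pow_one, fseries, PowerSeries.coeff_mk, if_pos (by omega)]
    push_cast; ring
  · have h : alphaCoeff l 2 = ∑ p ∈ Finset.HasAntidiagonal.antidiagonal (l+4),
        (if 2 ≤ p.1 then (1:ℝ)/p.1 else 0) * (if 2 ≤ p.2 then (1:ℝ)/p.2 else 0) := by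
      rw [alphaCoeff, pow_two, PowerSeries.coeff_mul]
      have : 2 * 2 + l = l + 4 := by ring
      rw [this]
      simp [fseries]
    rw [h, alpha_sum_id]
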